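/- Let u₁, u₂ : E → [0,∞) be real-valued supermedian functions for (P_t) (in particular, real-valued excessive functions) and u := u₁ − u₂. Then for every x ∈ E, Var^{ℙ^x}((u(X_t))_{t≥0}) ≤ u₁(x) + u₂(x) < ∞; hence (u(X_t))_{t≥0} is a ℙ^x-quasimartingale for every x ∈ E. -/

import Mathlib

open MeasureTheory ProbabilityTheory ENNReal Filter
open scoped NNReal

/-- A sub-Markovian semigroup of kernels on a measurable space `E`. -/
structure SubMarkovSemigroup (E : Type*) [MeasurableSpace E] where
  P : ℝ≥0 → Kernel E E
  subMarkov : ∀ t x, P t x Set.univ ≤ 1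
  map_zero : ∀ (f : E → ℝ≥0∞), Measurable f → ∀ x, ∫⁻ y, f y ∂(P 0 x) = f x
  map_add : ∀ (t s : ℝ≥0) (f : E → ℝ≥0∞), Measurable f → ∀ x,
      ∫⁻ y, f y ∂(P (t + s) x) = ∫⁻ y, ∫⁻ z, f z ∂(P s y) ∂(P t x)

/-- Action of the time-`t` kernel on real-valued functions: `P_t f = P_t f⁺ - P_t f⁻`. -/
noncomputable def SubMarkovSemigroup.act {E : Type*} [MeasurableSpace E]
    (S : SubMarkovSemigroup E) (t : ℝ≥0) (f : E → ℝ) (x : E) : ℝ :=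
  ∫ y, f y ∂(S.P t x)

/-- A finite partition `0 = t_0 ≤ t_1 ≤ … ≤ t_n < ∞` of `ℝ₊`. -/
structure FinPartition where
  n : ℕ
  t : Fin (n + 1) → ℝ≥0
  mono : Monotone t
  first : t 0 = 0

/-- `V_τ(u) = Σ_{i=1}^n P_{t_{i-1}} |u - P_{t_i - t_{i-1}} u| + P_{t_n}|u|`. -/
noncomputable def SubMarkovSemigroup.V {E : Type*} [MeasurableSpace E]
    (S : SubMarkovSemigroup E) (u : E → ℝ) (τ : FinPartition) (x : E) : ℝ :=
  (∑ i : Fin τ.n, S.act (τ.t i.castSucc)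
      (fun y => |u y - S.act (τ.t i.succ - τ.t i.castSucc) u y|) x)
  + S.act (τ.t (Fin.last τ.n)) (fun y => |u y|) x

/-- The quasimartingale variation `Var^ℙ(Z)` of a process `Z`. -/
noncomputable def quasiVar {Ω : Type*} {mΩ : MeasurableSpace Ω}
    (𝒢 : Filtration ℝ≥0 mΩ) (Pr : Measure Ω) (Z : ℝ≥0 → Ω → ℝ) : ℝ≥0∞ :=
  ⨆ τ : FinPartition, ENNReal.ofReal (∫ ω,
    ((∑ i : Fin τ.n,
        |(Pr[(fun ω' => Z (τ.t i.succ) ω' - Z (τ.t i.castSucc) ω') | 𝒢 (τ.t i.castSucc)]) ω|)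
      + |Z (τ.t (Fin.last τ.n)) ω|) ∂Pr)

section Aux
variable {E : Type*} [MeasurableSpace E] (S : SubMarkovSemigroup E)

lemma aux_isFiniteKernel (t : ℝ≥0) : IsFiniteKernel (S.P t) :=
  ⟨⟨1, one_lt_top, fun x => S.subMarkov t x⟩⟩

variable {f g : E → ℝ}

lemma aux_act_eq_lintegral (t : ℝ≥0) (hf : Measurable f) (hpos : ∀ y, 0 ≤ f y) (x : E) :
    S.act t f x = (∫⁻ y, ENNReal.ofReal (f y) ∂(S.P t x)).toReal :=
  integral_eq_lintegral_of_nonneg_ae (ae_of_all _ hpos) hf.aestronglyMeasurable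

lemma aux_act_nonneg (t : ℝ≥0) (hpos : ∀ y, 0 ≤ f y) (x : E) : 0 ≤ S.act t f x :=
  integral_nonneg hpos

lemma aux_act_measurable (t : ℝ≥0) (hf : Measurable f) (hpos : ∀ y, 0 ≤ f y) :
    Measurable (fun y => S.act t f y) := by
  haveI := aux_isFiniteKernel S t
  have h : (fun y => S.act t f y) = fun y => (∫⁻ z, ENNReal.ofReal (f z) ∂(S.P t y)).toReal :=
    funext (aux_act_eq_lintegral S t hf hpos)
  rw [h]
  have hunc : Measurable (Function.uncurry fun (_ : E) z => ENNReal.ofReal (f z)) :=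
    (ENNReal.measurable_ofReal.comp hf).comp measurable_snd
  exact (Measurable.lintegral_kernel_prod_right hunc).ennreal_toReal

lemma aux_integrable (t : ℝ≥0) (x : E) (hf : Measurable f) (hpos : ∀ y, 0 ≤ f y)
    (h : ∫⁻ y, ENNReal.ofReal (f y) ∂(S.P t x) ≠ ∞) : Integrable f (S.P t x) := by
  refine ⟨hf.aestronglyMeasurable, ?_⟩
  rw [hasFiniteIntegral_iff_ofReal (ae_of_all _ hpos)]
  exact h.lt_top

lemma aux_act_act (t s : ℝ≥0) (hf : Measurable f) (hpos : ∀ y, 0 ≤ f y)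
    (hfin : ∀ y, ∫⁻ z, ENNReal.ofReal (f z) ∂(S.P s y) ≠ ∞) (x : E) :
    S.act t (fun y => S.act s f y) x = S.act (t + s) f x := by
  haveI := aux_isFiniteKernel S s
  have h1 : S.act t (fun y => S.act s f y) x
      = (∫⁻ y, ∫⁻ z, ENNReal.ofReal (f z) ∂(S.P s y) ∂(S.P t x)).toReal := by
    rw [aux_act_eq_lintegral S t (aux_act_measurable S s hf hpos)
      (fun y => aux_act_nonneg S s hpos y) x]
    congr 1
    refine lintegral_congr fun y => ?_
    rw [aux_act_eq_lintegral S s hf hpos y, ENNReal.ofReal_toReal (hfin y)]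
  rw [h1, ← S.map_add t s (fun z => ENNReal.ofReal (f z)) (by exact ENNReal.measurable_ofReal.comp hf) x,
    aux_act_eq_lintegral S (t + s) hf hpos x]

lemma aux_act_zero (hf : Measurable f) (hpos : ∀ y, 0 ≤ f y) (x : E) :
    S.act 0 f x = f x := by
  rw [aux_act_eq_lintegral S 0 hf hpos x, S.map_zero (fun z => ENNReal.ofReal (f z)) (by exact ENNReal.measurable_ofReal.comp hf) x,
    ENNReal.toReal_ofReal (hpos x)]

end Aux

section Transfer
variable {E : Type*} [MeasurableSpace E] (S : SubMarkovSemigroup E)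
variable {Ω : Type*} {mΩ : MeasurableSpace Ω} (𝒢 : Filtration ℝ≥0 mΩ)
    (X : ℝ≥0 → Ω → E) (Px : E → Measure Ω)

lemma aux_transfer_lintegral
    (hAdapted : ∀ t : ℝ≥0, @Measurable Ω E (𝒢 t) _ (X t))
    (hProb : ∀ x, IsProbabilityMeasure (Px x))
    (hStart : ∀ x, Px x {ω | X 0 ω = x} = 1)
    (hMarkov : ∀ (s t : ℝ≥0) (f : E → ℝ), Measurable f →
      (∀ x : E, Integrable f (S.P t x)) → ∀ x : E,
      (Px x)[(fun ω => f (X (s + t) ω)) | 𝒢 s] =ᵐ[Px x] fun ω => S.act t f (X s ω))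
    (x : E) (t : ℝ≥0) {f : E → ℝ} (hf : Measurable f) (hpos : ∀ y, 0 ≤ f y) :
    ∫⁻ ω, ENNReal.ofReal (f (X t ω)) ∂(Px x) = ∫⁻ y, ENNReal.ofReal (f y) ∂(S.P t x) := by
  haveI := hProb x
  haveI := aux_isFiniteKernel S t
  have hXt : Measurable (X t) := (hAdapted t).mono (𝒢.le t) le_rfl
  have hX0 : Measurable (X 0) := (hAdapted 0).mono (𝒢.le 0) le_rfl
  set fn : ℕ → E → ℝ := fun n y => min (f y) n with hfn
  have hfnm : ∀ n, Measurable (fn n) := fun n => hf.min measurable_const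
  have hfnpos : ∀ n y, 0 ≤ fn n y := fun n y => le_min (hpos y) (Nat.cast_nonneg n)
  have hfnbd : ∀ n y, ‖fn n y‖ ≤ (n : ℝ) := fun n y => by
    rw [Real.norm_eq_abs, abs_of_nonneg (hfnpos n y)]; exact min_le_right _ _
  have hfnint : ∀ n (y : E), Integrable (fn n) (S.P t y) := fun n y => by
    haveI : IsFiniteMeasure (S.P t y) := IsFiniteKernel.isFiniteMeasure _
    exact ⟨(hfnm n).aestronglyMeasurable,
      HasFiniteIntegral.of_bounded (C := (n : ℝ)) (ae_of_all _ fun y => hfnbd n y)⟩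
  have key : ∀ n : ℕ, ∫⁻ ω, ENNReal.ofReal (fn n (X t ω)) ∂(Px x)
      = ∫⁻ y, ENNReal.ofReal (fn n y) ∂(S.P t x) := by
    intro n
    have hint_proc : Integrable (fun ω => fn n (X t ω)) (Px x) :=
      ⟨((hfnm n).comp hXt).aestronglyMeasurable,
        HasFiniteIntegral.of_bounded (C := (n : ℝ)) (ae_of_all _ fun ω => hfnbd n _)⟩
    have hM := hMarkov 0 t (fn n) (hfnm n) (fun y => hfnint n y) x
    simp only [zero_add] at hM
    have e1 : ∫ ω, fn n (X t ω) ∂(Px x) = ∫ ω, S.act t (fn n) (X 0 ω) ∂(Px x) := by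
      rw [← integral_condExp (𝒢.le 0) (μ := Px x) (f := fun ω => fn n (X t ω))]
      exact integral_congr_ae hM
    have hactm : Measurable (fun y => S.act t (fn n) y) :=
      aux_act_measurable S t (hfnm n) (hfnpos n)
    have hms : MeasurableSet {ω | S.act t (fn n) (X 0 ω) = S.act t (fn n) x} := by
      have := (hactm.comp hX0) (measurableSet_singleton (S.act t (fn n) x))
      simpa [Set.preimage, Set.mem_singleton_iff] using this
    have hfull : Px x {ω | S.act t (fn n) (X 0 ω) = S.act t (fn n) x} = 1 := by
      refine le_antisymm prob_le_one ?_
      refine le_trans (le_of_eq (hStart x).symm) (measure_mono ?_)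
      intro ω hω
      simp only [Set.mem_setOf_eq] at hω ⊢
      rw [hω]
    have hae : (fun ω => S.act t (fn n) (X 0 ω)) =ᵐ[Px x] fun _ => S.act t (fn n) x := by
      rw [Filter.EventuallyEq, ae_iff]
      have h2 : {ω | ¬ S.act t (fn n) (X 0 ω) = S.act t (fn n) x}
          = {ω | S.act t (fn n) (X 0 ω) = S.act t (fn n) x}ᶜ := rfl
      rw [h2, measure_compl hms (measure_ne_top _ _), hfull, measure_univ, tsub_self]
    have e2 : ∫ ω, S.act t (fn n) (X 0 ω) ∂(Px x) = S.act t (fn n) x := by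
      rw [integral_congr_ae hae, integral_const]
      simp
    have e3 : ∫ ω, fn n (X t ω) ∂(Px x) = ∫ y, fn n y ∂(S.P t x) := e1.trans e2
    rw [← ofReal_integral_eq_lintegral_ofReal hint_proc (ae_of_all _ fun ω => hfnpos n _),
        ← ofReal_integral_eq_lintegral_ofReal (hfnint n x) (ae_of_all _ (hfnpos n)), e3]
  have hsup : ∀ y : E, (⨆ n : ℕ, ENNReal.ofReal (fn n y)) = ENNReal.ofReal (f y) := by
    intro y
    apply le_antisymm
    · exact iSup_le fun n => ENNReal.ofReal_le_ofReal (min_le_left _ _)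
    · obtain ⟨n, hn⟩ := exists_nat_ge (f y)
      exact le_iSup_of_le n (ENNReal.ofReal_le_ofReal (le_min le_rfl hn))
  have hmono : ∀ g : E → ℝ≥0∞, True := fun _ => trivial
  calc ∫⁻ ω, ENNReal.ofReal (f (X t ω)) ∂(Px x)
      = ∫⁻ ω, ⨆ n, ENNReal.ofReal (fn n (X t ω)) ∂(Px x) := by
        refine lintegral_congr fun ω => (hsup (X t ω)).symm
    _ = ⨆ n, ∫⁻ ω, ENNReal.ofReal (fn n (X t ω)) ∂(Px x) := by
        refine lintegral_iSup (fun n => (ENNReal.measurable_ofReal.comp (hfnm n)).comp hXt) ?_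
        intro n m hnm ω
        exact ENNReal.ofReal_le_ofReal (min_le_min le_rfl (Nat.cast_le.mpr hnm))
    _ = ⨆ n, ∫⁻ y, ENNReal.ofReal (fn n y) ∂(S.P t x) := by
        exact iSup_congr key
    _ = ∫⁻ y, ⨆ n, ENNReal.ofReal (fn n y) ∂(S.P t x) := by
        refine (lintegral_iSup (fun n => ENNReal.measurable_ofReal.comp (hfnm n)) ?_).symm
        intro n m hnm y
        exact ENNReal.ofReal_le_ofReal (min_le_min le_rfl (Nat.cast_le.mpr hnm))
    _ = ∫⁻ y, ENNReal.ofReal (f y) ∂(S.P t x) := lintegral_congr hsup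

end Transfer

lemma aux_telescope {n : ℕ} (A : Fin (n + 1) → ℝ) :
    ∑ i : Fin n, (A i.castSucc - A i.succ) = A 0 - A (Fin.last n) := by
  set F : ℕ → ℝ := fun k => if h : k < n + 1 then A ⟨k, h⟩ else 0 with hF
  have h1 : ∀ i : Fin n, A i.castSucc - A i.succ = F i - F ((i : ℕ) + 1) := by
    intro i
    have hi1 : (i : ℕ) < n + 1 := Nat.lt_succ_of_lt i.isLt
    have hi2 : (i : ℕ) + 1 < n + 1 := Nat.succ_lt_succ i.isLt
    simp only [hF, dif_pos hi1, dif_pos hi2]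
    congr 1
  calc ∑ i : Fin n, (A i.castSucc - A i.succ)
      = ∑ i : Fin n, (F i - F ((i : ℕ) + 1)) := Finset.sum_congr rfl fun i _ => h1 i
    _ = ∑ k ∈ Finset.range n, (F k - F (k + 1)) :=
        Fin.sum_univ_eq_sum_range (fun k => F k - F (k + 1)) n
    _ = F 0 - F n := Finset.sum_range_sub' F n
    _ = A 0 - A (Fin.last n) := by
        simp only [hF, dif_pos (Nat.zero_lt_succ n), dif_pos (Nat.lt_succ_self n)]
        congr 1

section Transfer2
variable {E : Type*} [MeasurableSpace E] (S : SubMarkovSemigroup E)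
variable {Ω : Type*} {mΩ : MeasurableSpace Ω} (𝒢 : Filtration ℝ≥0 mΩ)
    (X : ℝ≥0 → Ω → E) (Px : E → Measure Ω)

lemma aux_transfer_integrable
    (hAdapted : ∀ t : ℝ≥0, @Measurable Ω E (𝒢 t) _ (X t))
    (hProb : ∀ x, IsProbabilityMeasure (Px x))
    (hStart : ∀ x, Px x {ω | X 0 ω = x} = 1)
    (hMarkov : ∀ (s t : ℝ≥0) (f : E → ℝ), Measurable f →
      (∀ x : E, Integrable f (S.P t x)) → ∀ x : E,
      (Px x)[(fun ω => f (X (s + t) ω)) | 𝒢 s] =ᵐ[Px x] fun ω => S.act t f (X s ω))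
    (x : E) (t : ℝ≥0) {f : E → ℝ} (hf : Measurable f) (hpos : ∀ y, 0 ≤ f y)
    (hfin : ∫⁻ y, ENNReal.ofReal (f y) ∂(S.P t x) ≠ ∞) :
    Integrable (fun ω => f (X t ω)) (Px x) := by
  refine ⟨(hf.comp ((hAdapted t).mono (𝒢.le t) le_rfl)).aestronglyMeasurable, ?_⟩
  rw [hasFiniteIntegral_iff_ofReal (ae_of_all _ fun ω => hpos (X t ω)),
    aux_transfer_lintegral S 𝒢 X Px hAdapted hProb hStart hMarkov x t hf hpos]
  exact hfin.lt_top

lemma aux_transfer_integral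
    (hAdapted : ∀ t : ℝ≥0, @Measurable Ω E (𝒢 t) _ (X t))
    (hProb : ∀ x, IsProbabilityMeasure (Px x))
    (hStart : ∀ x, Px x {ω | X 0 ω = x} = 1)
    (hMarkov : ∀ (s t : ℝ≥0) (f : E → ℝ), Measurable f →
      (∀ x : E, Integrable f (S.P t x)) → ∀ x : E,
      (Px x)[(fun ω => f (X (s + t) ω)) | 𝒢 s] =ᵐ[Px x] fun ω => S.act t f (X s ω))
    (x : E) (t : ℝ≥0) {f : E → ℝ} (hf : Measurable f) (hpos : ∀ y, 0 ≤ f y) :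
    ∫ ω, f (X t ω) ∂(Px x) = S.act t f x := by
  rw [integral_eq_lintegral_of_nonneg_ae (ae_of_all _ fun ω => hpos (X t ω))
      (hf.comp ((hAdapted t).mono (𝒢.le t) le_rfl)).aestronglyMeasurable,
    aux_transfer_lintegral S 𝒢 X Px hAdapted hProb hStart hMarkov x t hf hpos,
    aux_act_eq_lintegral S t hf hpos x]

end Transfer2


/-- If `u₁, u₂ : E → [0,∞)` are real-valued supermedian functions and
`u := u₁ - u₂`, then for every `x`, `Var^{ℙ^x}((u(X_t))_t) ≤ u₁(x) + u₂(x) < ∞`; in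
particular `(u(X_t))_t` is a `ℙ^x`-quasimartingale for every `x`. -/
theorem statement5 {E : Type*} [MeasurableSpace E] (S : SubMarkovSemigroup E)
    {Ω : Type*} {mΩ : MeasurableSpace Ω} (𝒢 : Filtration ℝ≥0 mΩ)
    (X : ℝ≥0 → Ω → E) (Px : E → Measure Ω)
    (hAdapted : ∀ t : ℝ≥0, @Measurable Ω E (𝒢 t) _ (X t))
    (hProb : ∀ x, IsProbabilityMeasure (Px x))
    (hStart : ∀ x, Px x {ω | X 0 ω = x} = 1)
    (hMarkov : ∀ (s t : ℝ≥0) (f : E → ℝ), Measurable f →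
      (∀ x : E, Integrable f (S.P t x)) → ∀ x : E,
      (Px x)[(fun ω => f (X (s + t) ω)) | 𝒢 s] =ᵐ[Px x] fun ω => S.act t f (X s ω))
    (u₁ u₂ : E → ℝ) (hm₁ : Measurable u₁) (hm₂ : Measurable u₂)
    (hpos₁ : ∀ x, 0 ≤ u₁ x) (hpos₂ : ∀ x, 0 ≤ u₂ x)
    (hsm₁ : ∀ (t : ℝ≥0) (x : E),
      ∫⁻ y, ENNReal.ofReal (u₁ y) ∂(S.P t x) ≤ ENNReal.ofReal (u₁ x))
    (hsm₂ : ∀ (t : ℝ≥0) (x : E),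
      ∫⁻ y, ENNReal.ofReal (u₂ y) ∂(S.P t x) ≤ ENNReal.ofReal (u₂ x))
    (u : E → ℝ) (hu : u = fun x => u₁ x - u₂ x) :
    ∀ x : E,
      quasiVar 𝒢 (Px x) (fun t ω => u (X t ω)) ≤ ENNReal.ofReal (u₁ x + u₂ x) ∧
      quasiVar 𝒢 (Px x) (fun t ω => u (X t ω)) < ∞ := by
  -- basic facts
  have hmu : Measurable u := by rw [hu]; exact hm₁.sub hm₂
  have hfin₁ : ∀ (t : ℝ≥0) (y : E), ∫⁻ z, ENNReal.ofReal (u₁ z) ∂(S.P t y) ≠ ∞ :=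
    fun t y => ((hsm₁ t y).trans_lt ENNReal.ofReal_lt_top).ne
  have hfin₂ : ∀ (t : ℝ≥0) (y : E), ∫⁻ z, ENNReal.ofReal (u₂ z) ∂(S.P t y) ≠ ∞ :=
    fun t y => ((hsm₂ t y).trans_lt ENNReal.ofReal_lt_top).ne
  set w : E → ℝ := fun y => u₁ y + u₂ y with hw
  have hmw : Measurable w := hm₁.add hm₂
  have hposw : ∀ y, 0 ≤ w y := fun y => add_nonneg (hpos₁ y) (hpos₂ y)
  have hsmw : ∀ (t : ℝ≥0) (y : E),
      ∫⁻ z, ENNReal.ofReal (w z) ∂(S.P t y) ≤ ENNReal.ofReal (w y) := by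
    intro t y
    have h1 : ∀ z, ENNReal.ofReal (w z) = ENNReal.ofReal (u₁ z) + ENNReal.ofReal (u₂ z) :=
      fun z => ENNReal.ofReal_add (hpos₁ z) (hpos₂ z)
    calc ∫⁻ z, ENNReal.ofReal (w z) ∂(S.P t y)
        = ∫⁻ z, (ENNReal.ofReal (u₁ z) + ENNReal.ofReal (u₂ z)) ∂(S.P t y) :=
          lintegral_congr h1
      _ = (∫⁻ z, ENNReal.ofReal (u₁ z) ∂(S.P t y)) + ∫⁻ z, ENNReal.ofReal (u₂ z) ∂(S.P t y) :=
          lintegral_add_left (ENNReal.measurable_ofReal.comp hm₁) _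
      _ ≤ ENNReal.ofReal (u₁ y) + ENNReal.ofReal (u₂ y) := add_le_add (hsm₁ t y) (hsm₂ t y)
      _ = ENNReal.ofReal (w y) := (h1 y).symm
  have hfinw : ∀ (t : ℝ≥0) (y : E), ∫⁻ z, ENNReal.ofReal (w z) ∂(S.P t y) ≠ ∞ :=
    fun t y => ((hsmw t y).trans_lt ENNReal.ofReal_lt_top).ne
  -- integrability on kernels
  have hintP : ∀ (g : E → ℝ), Measurable g → (∀ y, 0 ≤ g y) → (∀ y, g y ≤ w y) →
      ∀ (t : ℝ≥0) (y : E), Integrable g (S.P t y) := by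
    intro g hg hgp hgw t y
    refine aux_integrable S t y hg hgp (ne_top_of_le_ne_top (hfinw t y) ?_)
    exact lintegral_mono fun z => ENNReal.ofReal_le_ofReal (hgw z)
  have hint₁ : ∀ (t : ℝ≥0) (y : E), Integrable u₁ (S.P t y) :=
    fun t y => aux_integrable S t y hm₁ hpos₁ (hfin₁ t y)
  have hint₂ : ∀ (t : ℝ≥0) (y : E), Integrable u₂ (S.P t y) :=
    fun t y => aux_integrable S t y hm₂ hpos₂ (hfin₂ t y)
  have hintu : ∀ (t : ℝ≥0) (y : E), Integrable u (S.P t y) := by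
    intro t y; rw [hu]; exact (hint₁ t y).sub (hint₂ t y)
  have hactu : ∀ (s : ℝ≥0) (y : E), S.act s u y = S.act s u₁ y - S.act s u₂ y := by
    intro s y
    simp only [SubMarkovSemigroup.act, hu]
    exact integral_sub (hint₁ s y) (hint₂ s y)
  have hact₁le : ∀ (t : ℝ≥0) (y : E), S.act t u₁ y ≤ u₁ y := fun t y => by
    rw [aux_act_eq_lintegral S t hm₁ hpos₁ y]
    exact ENNReal.toReal_le_of_le_ofReal (hpos₁ y) (hsm₁ t y)
  have hact₂le : ∀ (t : ℝ≥0) (y : E), S.act t u₂ y ≤ u₂ y := fun t y => by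
    rw [aux_act_eq_lintegral S t hm₂ hpos₂ y]
    exact ENNReal.toReal_le_of_le_ofReal (hpos₂ y) (hsm₂ t y)
  have hactum : ∀ s : ℝ≥0, Measurable (fun y => S.act s u y) := by
    intro s
    have h : (fun y => S.act s u y) = fun y => S.act s u₁ y - S.act s u₂ y :=
      funext (hactu s)
    rw [h]
    exact (aux_act_measurable S s hm₁ hpos₁).sub (aux_act_measurable S s hm₂ hpos₂)
  have hgle : ∀ (s : ℝ≥0) (y : E), |u y - S.act s u y|
      ≤ (u₁ y - S.act s u₁ y) + (u₂ y - S.act s u₂ y) := by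
    intro s y
    rw [hactu s y, hu]
    have h1 : u₁ y - u₂ y - (S.act s u₁ y - S.act s u₂ y)
        = (u₁ y - S.act s u₁ y) - (u₂ y - S.act s u₂ y) := by ring
    rw [h1]
    refine (abs_sub _ _).trans (le_of_eq ?_)
    rw [abs_of_nonneg (sub_nonneg.mpr (hact₁le s y)), abs_of_nonneg (sub_nonneg.mpr (hact₂le s y))]
  have hglew : ∀ (s : ℝ≥0) (y : E), |u y - S.act s u y| ≤ w y := by
    intro s y
    refine (hgle s y).trans ?_
    have h1 := aux_act_nonneg S s hpos₁ y
    have h2 := aux_act_nonneg S s hpos₂ y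
    simp only [hw]
    linarith
  have huabs : ∀ y, |u y| ≤ w y := by
    intro y
    rw [hu]
    calc |u₁ y - u₂ y| ≤ |u₁ y| + |u₂ y| := abs_sub _ _
      _ = w y := by rw [abs_of_nonneg (hpos₁ y), abs_of_nonneg (hpos₂ y)]
  intro x
  haveI := hProb x
  -- integrability of processes
  have hintu_proc : ∀ t : ℝ≥0, Integrable (fun ω => u (X t ω)) (Px x) := by
    intro t
    have hwint : Integrable (fun ω => w (X t ω)) (Px x) :=
      aux_transfer_integrable S 𝒢 X Px hAdapted hProb hStart hMarkov x t hmw hposw (hfinw t x)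
    refine hwint.mono ((hmu.comp ((hAdapted t).mono (𝒢.le t) le_rfl)).aestronglyMeasurable)
      (ae_of_all _ fun ω => ?_)
    rw [Real.norm_eq_abs, Real.norm_eq_abs, abs_of_nonneg (hposw _)]
    exact huabs _
  -- main bound per partition
  have main : ∀ τ : FinPartition,
      (∫ ω, ((∑ i : Fin τ.n,
          |((Px x)[(fun ω' => u (X (τ.t i.succ) ω') - u (X (τ.t i.castSucc) ω'))
              | 𝒢 (τ.t i.castSucc)]) ω|)
        + |u (X (τ.t (Fin.last τ.n)) ω)|) ∂(Px x)) ≤ u₁ x + u₂ x := by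
    intro τ
    set A : Fin (τ.n + 1) → ℝ := fun j => S.act (τ.t j) u₁ x with hA
    set B : Fin (τ.n + 1) → ℝ := fun j => S.act (τ.t j) u₂ x with hB
    set g : Fin τ.n → E → ℝ :=
      fun i y => |u y - S.act (τ.t i.succ - τ.t i.castSucc) u y| with hg
    have hgm : ∀ i, Measurable (g i) := fun i =>
      (hmu.sub (hactum _)).abs
    have hgpos : ∀ i y, 0 ≤ g i y := fun i y => abs_nonneg _
    have hgw : ∀ i y, g i y ≤ w y := fun i y => hglew _ y
    have hab : ∀ i : Fin τ.n,
        τ.t i.castSucc + (τ.t i.succ - τ.t i.castSucc) = τ.t i.succ :=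
      fun i => add_tsub_cancel_of_le (τ.mono i.castSucc_le_succ)
    -- conditional expectation identification
    have hCEabs : ∀ i : Fin τ.n,
        (fun ω => |((Px x)[(fun ω' => u (X (τ.t i.succ) ω') - u (X (τ.t i.castSucc) ω'))
            | 𝒢 (τ.t i.castSucc)]) ω|)
          =ᵐ[Px x] fun ω => g i (X (τ.t i.castSucc) ω) := by
      intro i
      set a := τ.t i.castSucc
      set b := τ.t i.succ
      set s := b - a with hs
      have hceA : (Px x)[(fun ω => u (X b ω)) | 𝒢 a]
          =ᵐ[Px x] fun ω => S.act s u (X a ω) := by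
        have h := hMarkov a s u hmu (fun y => hintu s y) x
        rw [hab i] at h
        exact h
      have hceB : (Px x)[(fun ω => u (X a ω)) | 𝒢 a] = fun ω => u (X a ω) :=
        condExp_of_stronglyMeasurable (𝒢.le a)
          (Measurable.stronglyMeasurable (hmu.comp (hAdapted a))) (hintu_proc a)
      have hCE : (Px x)[(fun ω' => u (X b ω') - u (X a ω')) | 𝒢 a]
          =ᵐ[Px x] fun ω => S.act s u (X a ω) - u (X a ω) := by
        have h0 : (fun ω' => u (X b ω') - u (X a ω'))
            = (fun ω => u (X b ω)) - fun ω => u (X a ω) := rfl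
        rw [h0]
        refine (condExp_sub (hintu_proc b) (hintu_proc a) (𝒢 a)).trans ?_
        have h2 : (Px x)[(fun ω => u (X a ω)) | 𝒢 a] =ᵐ[Px x] fun ω => u (X a ω) := by
          rw [hceB]
        exact hceA.sub h2
      filter_upwards [hCE] with ω hω
      rw [hω]
      exact abs_sub_comm _ _
    -- value of each integral
    have hIi : ∀ i : Fin τ.n,
        ∫ ω, |((Px x)[(fun ω' => u (X (τ.t i.succ) ω') - u (X (τ.t i.castSucc) ω'))
            | 𝒢 (τ.t i.castSucc)]) ω| ∂(Px x) = S.act (τ.t i.castSucc) (g i) x := by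
      intro i
      rw [integral_congr_ae (hCEabs i)]
      exact aux_transfer_integral S 𝒢 X Px hAdapted hProb hStart hMarkov x _ (hgm i) (hgpos i)
    have hIlast : ∫ ω, |u (X (τ.t (Fin.last τ.n)) ω)| ∂(Px x)
        = S.act (τ.t (Fin.last τ.n)) (fun y => |u y|) x :=
      aux_transfer_integral S 𝒢 X Px hAdapted hProb hStart hMarkov x _ hmu.abs
        (fun y => abs_nonneg _)
    -- split integral
    have hint_ce : ∀ i : Fin τ.n, Integrable
        (fun ω => |((Px x)[(fun ω' => u (X (τ.t i.succ) ω') - u (X (τ.t i.castSucc) ω'))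
            | 𝒢 (τ.t i.castSucc)]) ω|) (Px x) := fun i => integrable_condExp.abs
    have hsplit : (∫ ω, ((∑ i : Fin τ.n,
          |((Px x)[(fun ω' => u (X (τ.t i.succ) ω') - u (X (τ.t i.castSucc) ω'))
              | 𝒢 (τ.t i.castSucc)]) ω|)
        + |u (X (τ.t (Fin.last τ.n)) ω)|) ∂(Px x))
        = (∑ i : Fin τ.n, S.act (τ.t i.castSucc) (g i) x)
          + S.act (τ.t (Fin.last τ.n)) (fun y => |u y|) x := by
      rw [integral_add (integrable_finset_sum _ fun i _ => hint_ce i) ((hintu_proc _).abs),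
        integral_finset_sum _ (fun i _ => hint_ce i), hIlast]
      congr 1
      exact Finset.sum_congr rfl fun i _ => hIi i
    rw [hsplit]
    -- bound each summand
    have hterm : ∀ i : Fin τ.n, S.act (τ.t i.castSucc) (g i) x
        ≤ (A i.castSucc - A i.succ) + (B i.castSucc - B i.succ) := by
      intro i
      set a := τ.t i.castSucc
      set s := τ.t i.succ - τ.t i.castSucc with hs
      have hintg : Integrable (g i) (S.P a x) := hintP (g i) (hgm i) (hgpos i) (hgw i) a x
      have hintact₁ : Integrable (fun y => S.act s u₁ y) (S.P a x) :=
        hintP _ (aux_act_measurable S s hm₁ hpos₁) (fun y => aux_act_nonneg S s hpos₁ y)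
          (fun y => (hact₁le s y).trans (by simp only [hw]; linarith [hpos₂ y])) a x
      have hintact₂ : Integrable (fun y => S.act s u₂ y) (S.P a x) :=
        hintP _ (aux_act_measurable S s hm₂ hpos₂) (fun y => aux_act_nonneg S s hpos₂ y)
          (fun y => (hact₂le s y).trans (by simp only [hw]; linarith [hpos₁ y])) a x
      have i1 : Integrable (fun y => u₁ y - S.act s u₁ y) (S.P a x) :=
        (hint₁ a x).sub hintact₁
      have i2 : Integrable (fun y => u₂ y - S.act s u₂ y) (S.P a x) :=
        (hint₂ a x).sub hintact₂
      have hinth : Integrable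
          (fun y => (u₁ y - S.act s u₁ y) + (u₂ y - S.act s u₂ y)) (S.P a x) :=
        i1.add i2
      have hmono : S.act a (g i) x
          ≤ ∫ y, ((u₁ y - S.act s u₁ y) + (u₂ y - S.act s u₂ y)) ∂(S.P a x) :=
        integral_mono hintg hinth (fun y => hgle s y)
      refine hmono.trans (le_of_eq ?_)
      rw [integral_add i1 i2,
        integral_sub (hint₁ a x) hintact₁, integral_sub (hint₂ a x) hintact₂]
      have e₁ : ∫ y, S.act s u₁ y ∂(S.P a x) = A i.succ := by
        have := aux_act_act S a s hm₁ hpos₁ (fun y => hfin₁ s y) x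
        rw [hab i] at this
        exact this
      have e₂ : ∫ y, S.act s u₂ y ∂(S.P a x) = B i.succ := by
        have := aux_act_act S a s hm₂ hpos₂ (fun y => hfin₂ s y) x
        rw [hab i] at this
        exact this
      rw [e₁, e₂]
      rfl
    have hlast : S.act (τ.t (Fin.last τ.n)) (fun y => |u y|) x
        ≤ A (Fin.last τ.n) + B (Fin.last τ.n) := by
      set tn := τ.t (Fin.last τ.n)
      have h1 : Integrable (fun y => |u y|) (S.P tn x) :=
        hintP _ hmu.abs (fun y => abs_nonneg _) huabs tn x
      have h2 : Integrable (fun y => u₁ y + u₂ y) (S.P tn x) := (hint₁ tn x).add (hint₂ tn x)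
      have := integral_mono h1 h2 huabs
      refine this.trans (le_of_eq ?_)
      rw [integral_add (hint₁ tn x) (hint₂ tn x)]
      rfl
    have hA0 : A 0 = u₁ x := by
      simp only [hA, τ.first]
      exact aux_act_zero S hm₁ hpos₁ x
    have hB0 : B 0 = u₂ x := by
      simp only [hB, τ.first]
      exact aux_act_zero S hm₂ hpos₂ x
    calc (∑ i : Fin τ.n, S.act (τ.t i.castSucc) (g i) x)
          + S.act (τ.t (Fin.last τ.n)) (fun y => |u y|) x
        ≤ (∑ i : Fin τ.n, ((A i.castSucc - A i.succ) + (B i.castSucc - B i.succ)))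
          + (A (Fin.last τ.n) + B (Fin.last τ.n)) :=
          add_le_add (Finset.sum_le_sum fun i _ => hterm i) hlast
      _ = ((A 0 - A (Fin.last τ.n)) + (B 0 - B (Fin.last τ.n)))
          + (A (Fin.last τ.n) + B (Fin.last τ.n)) := by
          rw [Finset.sum_add_distrib, aux_telescope A, aux_telescope B]
      _ = A 0 + B 0 := by ring
      _ = u₁ x + u₂ x := by rw [hA0, hB0]
  have hle : quasiVar 𝒢 (Px x) (fun t ω => u (X t ω)) ≤ ENNReal.ofReal (u₁ x + u₂ x) := by
    refine iSup_le fun τ => ?_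
    exact ENNReal.ofReal_le_ofReal (main τ)
  exact ⟨hle, hle.trans_lt ENNReal.ofReal_lt_top⟩
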